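/- Let (u,v) be a radial solution of -(ru')' = r e^v(e^u+1), -(rv')' = r e^u(e^v-1) on (0,∞) with u - 2N₁ ln r and v - 2N₂ ln r bounded near 0. Then for every r > 0 the Pohozaev identity holds: 2∫₀^r t e^{u+v} dt = 4(N₁+1)(N₂+1) - (ru'(r)+2)(rv'(r)+2) - r²(e^{u(r)+v(r)} + e^{v(r)} - e^{u(r)}). -/

import Mathlib

open MeasureTheory Real intervalIntegral

private lemma integrableOn_of_bdd {f : ℝ → ℝ} {s : Set ℝ} (hs : MeasurableSet s)
    (hfin : volume s < ⊤) (hc : ContinuousOn f s) {M : ℝ} (hb : ∀ x ∈ s, |f x| ≤ M) :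
    IntegrableOn f s := by
  refine ⟨hc.aestronglyMeasurable hs, HasFiniteIntegral.restrict_of_bounded (C := M) hfin ?_⟩
  exact (ae_restrict_iff' hs).2 (ae_of_all _ fun x hx => by
    rw [Real.norm_eq_abs]; exact hb x hx)

private lemma hasDerivAt_of_c2 {f : ℝ → ℝ} (hf : ContDiffOn ℝ 2 f (Set.Ioi 0)) {x : ℝ}
    (hx : 0 < x) : HasDerivAt f (deriv f x) x :=
  ((hf.differentiableOn (by norm_num)).differentiableAt (Ioi_mem_nhds hx)).hasDerivAt

private lemma hasDerivAt_w {f g : ℝ → ℝ} (hf : ContDiffOn ℝ 2 f (Set.Ioi 0))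
    (hODE : ∀ r > (0:ℝ), deriv (fun s => s * deriv f s) r = g r) {x : ℝ} (hx : 0 < x) :
    HasDerivAt (fun s => s * deriv f s) (g x) x := by
  have hf' : ContDiffOn ℝ 1 (deriv f) (Set.Ioi 0) :=
    hf.deriv_of_isOpen isOpen_Ioi (by norm_num)
  have h2 : HasDerivAt (deriv f) (deriv (deriv f) x) x :=
    ((hf'.differentiableOn one_ne_zero).differentiableAt (Ioi_mem_nhds hx)).hasDerivAt
  have h3 : HasDerivAt (fun s => s * deriv f s)
      (1 * deriv f x + x * deriv (deriv f) x) x := (hasDerivAt_id x).mul h2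
  have h4 : HasDerivAt (fun s => s * deriv f s) (deriv (fun s => s * deriv f s) x) x :=
    h3.differentiableAt.hasDerivAt
  rwa [hODE x hx] at h4

private lemma exp_bound {f : ℝ → ℝ} {N : ℕ} {C ε : ℝ}
    (h : ∀ r ∈ Set.Ioo (0:ℝ) ε, |f r - 2 * N * Real.log r| ≤ C) :
    ∀ r ∈ Set.Ioo (0:ℝ) (min ε 1), Real.exp (f r) ≤ Real.exp C := by
  intro r hr
  have h1 := h r ⟨hr.1, lt_of_lt_of_le hr.2 (min_le_left _ _)⟩
  have hlog : Real.log r ≤ 0 :=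
    Real.log_nonpos (le_of_lt hr.1) (le_of_lt (lt_of_lt_of_le hr.2 (min_le_right _ _)))
  have h2 : f r - 2 * N * Real.log r ≤ C := (abs_le.1 h1).2
  have h3 : (0:ℝ) ≤ 2 * N := by positivity
  have : f r ≤ C := by nlinarith
  exact Real.exp_le_exp.2 this

private lemma slope_limit (N : ℕ) (f g : ℝ → ℝ) (hf : ContDiffOn ℝ 2 f (Set.Ioi 0))
    (hg : ContinuousOn g (Set.Ioi 0))
    (hODE : ∀ r > (0:ℝ), deriv (fun s => s * deriv f s) r = g r)
    (M ε₁ : ℝ) (hε₁ : 0 < ε₁) (hM : ∀ r ∈ Set.Ioo (0:ℝ) ε₁, |g r| ≤ M)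
    (C ε₂ : ℝ) (hε₂ : 0 < ε₂)
    (hC : ∀ r ∈ Set.Ioo (0:ℝ) ε₂, |f r - 2 * N * Real.log r| ≤ C) :
    Filter.Tendsto (fun r => r * deriv f r) (nhdsWithin 0 (Set.Ioi 0)) (nhds (2 * N)) := by
  have hM0 : 0 ≤ M := le_trans (abs_nonneg _) (hM (ε₁/2) ⟨by positivity, by linarith⟩)
  set w : ℝ → ℝ := fun s => s * deriv f s with hw
  set ε : ℝ := min ε₁ ε₂ / 2 with hε
  have hεpos : 0 < ε := by positivity
  have hε1 : ε < ε₁ := by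
    have : min ε₁ ε₂ ≤ ε₁ := min_le_left _ _
    simp only [hε]; linarith [lt_min hε₁ hε₂]
  have hε2 : ε < ε₂ := by
    have : min ε₁ ε₂ ≤ ε₂ := min_le_right _ _
    simp only [hε]; linarith [lt_min hε₁ hε₂]
  have hmem1 : ∀ t : ℝ, 0 < t → t ≤ ε → t ∈ Set.Ioo (0:ℝ) ε₁ :=
    fun t ht1 ht2 => ⟨ht1, lt_of_le_of_lt ht2 hε1⟩
  have hmem2 : ∀ t : ℝ, 0 < t → t ≤ ε → t ∈ Set.Ioo (0:ℝ) ε₂ :=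
    fun t ht1 ht2 => ⟨ht1, lt_of_le_of_lt ht2 hε2⟩
  have hgsub : Set.Ioc (0:ℝ) ε ⊆ Set.Ioi 0 := fun t ht => ht.1
  -- integrability of g on Ioc 0 ε
  have hgInt : IntegrableOn g (Set.Ioc (0:ℝ) ε) := by
    refine integrableOn_of_bdd measurableSet_Ioc ?_ (hg.mono hgsub) (M := M) ?_
    · rw [Real.volume_Ioc]; exact ENNReal.ofReal_lt_top
    · exact fun x hx => hM x (hmem1 x hx.1 hx.2)
  set I : ℝ := ∫ t in Set.Ioc (0:ℝ) ε, g t with hI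
  set L : ℝ := w ε - I with hL
  -- FTC for w
  have hw_ftc : ∀ a ∈ Set.Ioc (0:ℝ) ε, w ε - w a = ∫ t in Set.Ioc a ε, g t := by
    intro a ha
    have h1 : ∫ t in a..ε, g t = w ε - w a := by
      refine intervalIntegral.integral_eq_sub_of_hasDerivAt (fun x hx => ?_) ?_
      · rw [Set.uIcc_of_le ha.2] at hx
        exact hasDerivAt_w hf hODE (lt_of_lt_of_le ha.1 hx.1)
      · refine (hg.mono ?_).intervalIntegrable
        rw [Set.uIcc_of_le ha.2]
        exact fun t ht => lt_of_lt_of_le ha.1 ht.1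
    rw [← h1, intervalIntegral.integral_of_le ha.2]
  have hsplit : ∀ a ∈ Set.Ioc (0:ℝ) ε,
      I = (∫ t in Set.Ioc (0:ℝ) a, g t) + ∫ t in Set.Ioc a ε, g t := by
    intro a ha
    rw [hI, ← Set.Ioc_union_Ioc_eq_Ioc (le_of_lt ha.1) ha.2]
    exact MeasureTheory.setIntegral_union (Set.Ioc_disjoint_Ioc_of_le le_rfl) measurableSet_Ioc
      (hgInt.mono_set (Set.Ioc_subset_Ioc_right ha.2))
      (hgInt.mono_set (Set.Ioc_subset_Ioc_left (le_of_lt ha.1)))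
  have hwL : ∀ a ∈ Set.Ioc (0:ℝ) ε, w a - L = ∫ t in Set.Ioc (0:ℝ) a, g t := by
    intro a ha
    have h1 := hw_ftc a ha
    have h2 := hsplit a ha
    rw [hL]; linarith
  have hbnd : ∀ a ∈ Set.Ioc (0:ℝ) ε, |w a - L| ≤ M * a := by
    intro a ha
    rw [hwL a ha]
    have h1 : ‖∫ t in Set.Ioc (0:ℝ) a, g t‖ ≤ M * (volume (Set.Ioc (0:ℝ) a)).toReal := by
      refine norm_setIntegral_le_of_norm_le_const ?_ (fun x hx => ?_)
      · rw [Real.volume_Ioc]; exact ENNReal.ofReal_lt_top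
      · rw [Real.norm_eq_abs]
        exact hM x (hmem1 x hx.1 (le_trans hx.2 ha.2))
    rw [Real.norm_eq_abs] at h1
    have h2 : (volume (Set.Ioc (0:ℝ) a)).toReal = a := by
      rw [Real.volume_Ioc, ENNReal.toReal_ofReal (by linarith [ha.1])]; ring
    rw [h2] at h1
    exact h1
  -- w tends to L
  have hwlim : Filter.Tendsto w (nhdsWithin 0 (Set.Ioi 0)) (nhds L) := by
    rw [tendsto_iff_norm_sub_tendsto_zero]
    refine squeeze_zero_norm' (a := fun x : ℝ => M * x) ?_ ?_
    · filter_upwards [Ioc_mem_nhdsGT hεpos] with a ha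
      simpa [Real.norm_eq_abs, abs_abs] using hbnd a ha
    · have : Filter.Tendsto (fun a : ℝ => M * a) (nhdsWithin 0 (Set.Ioi 0)) (nhds (M * 0)) :=
        ((continuous_const.mul continuous_id).tendsto 0).mono_left nhdsWithin_le_nhds
      simpa using this
  -- identify L = 2N
  have hL2N : L = 2 * N := by
    by_contra hne
    set d : ℝ := |2 * (N:ℝ) - L| with hd
    have hdpos : 0 < d := abs_pos.2 (by intro h0; exact hne (by linarith))
    set B : ℝ := |f ε| + |L| * |Real.log ε| + M * ε with hB
    have hBbd : ∀ a ∈ Set.Ioo (0:ℝ) ε, |f a - L * Real.log a| ≤ B := by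
      intro a ha
      have haε : a ≤ ε := le_of_lt ha.2
      have hfc : ∫ t in a..ε, deriv f t = f ε - f a := by
        refine intervalIntegral.integral_eq_sub_of_hasDerivAt (fun x hx => ?_) ?_
        · rw [Set.uIcc_of_le haε] at hx
          exact hasDerivAt_of_c2 hf (lt_of_lt_of_le ha.1 hx.1)
        · refine ((hf.continuousOn_deriv_of_isOpen isOpen_Ioi (by norm_num)).mono ?_).intervalIntegrable
          rw [Set.uIcc_of_le haε]
          exact fun t ht => lt_of_lt_of_le ha.1 ht.1
      have h0uIcc : (0:ℝ) ∉ Set.uIcc a ε := by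
        rw [Set.uIcc_of_le haε]
        exact fun h => absurd h.1 (not_le.2 ha.1)
      have hinv_int : IntervalIntegrable (fun t : ℝ => L / t) volume a ε := by
        refine ContinuousOn.intervalIntegrable ?_
        exact ContinuousOn.div continuousOn_const continuousOn_id
          (fun t ht => by rintro rfl; exact h0uIcc ht)
      have hdf_int : IntervalIntegrable (deriv f) volume a ε := by
        refine ((hf.continuousOn_deriv_of_isOpen isOpen_Ioi (by norm_num)).mono ?_).intervalIntegrable
        rw [Set.uIcc_of_le haε]
        exact fun t ht => lt_of_lt_of_le ha.1 ht.1
      have hlogint : ∫ t in a..ε, L / t = L * (Real.log ε - Real.log a) := by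
        have : ∀ t : ℝ, L / t = L * (1 / t) := fun t => by ring
        simp_rw [this]
        rw [intervalIntegral.integral_const_mul, integral_one_div h0uIcc,
          Real.log_div (ne_of_gt hεpos) (ne_of_gt ha.1)]
      have hsub : ∫ t in a..ε, (deriv f t - L / t)
          = (f ε - f a) - L * (Real.log ε - Real.log a) := by
        rw [intervalIntegral.integral_sub hdf_int hinv_int, hfc, hlogint]
      have hptbd : ∀ x ∈ Set.uIoc a ε, ‖deriv f x - L / x‖ ≤ M := by
        intro x hx
        rw [Set.uIoc_of_le haε] at hx
        have hx0 : 0 < x := lt_trans ha.1 hx.1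
        have hxε : x ∈ Set.Ioc (0:ℝ) ε := ⟨hx0, hx.2⟩
        have h1 : deriv f x - L / x = (w x - L) / x := by
          field_simp [hw]; ring
        rw [Real.norm_eq_abs, h1, abs_div, abs_of_pos hx0, div_le_iff₀ hx0]
        calc |w x - L| ≤ M * x := hbnd x hxε
          _ = M * x := rfl
      have hibd : ‖∫ t in a..ε, (deriv f t - L / t)‖ ≤ M * |ε - a| :=
        intervalIntegral.norm_integral_le_of_norm_le_const hptbd
      rw [hsub, Real.norm_eq_abs] at hibd
      have habs : |ε - a| ≤ ε := by
        rw [abs_of_nonneg (by linarith)]; linarith [ha.1]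
      have h3 : |(f ε - f a) - L * (Real.log ε - Real.log a)| ≤ M * ε :=
        le_trans hibd (by nlinarith)
      calc |f a - L * Real.log a|
          = |(f ε - L * Real.log ε) - ((f ε - f a) - L * (Real.log ε - Real.log a))| := by
            ring_nf
        _ ≤ |f ε - L * Real.log ε| + |(f ε - f a) - L * (Real.log ε - Real.log a)| :=
            abs_sub _ _
        _ ≤ (|f ε| + |L| * |Real.log ε|) + M * ε := by
            have h9 : |f ε - L * Real.log ε| ≤ |f ε| + |L| * |Real.log ε| := by
              calc |f ε - L * Real.log ε| ≤ |f ε| + |L * Real.log ε| := abs_sub _ _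
                _ = |f ε| + |L| * |Real.log ε| := by rw [abs_mul]
            exact add_le_add h9 h3
        _ = B := by rw [hB]
    -- choose small a
    have hBnn : 0 ≤ B := le_trans (abs_nonneg _) (hBbd (ε/2) ⟨by positivity, by linarith⟩)
    have hCnn : 0 ≤ C := le_trans (abs_nonneg _) (hC (ε₂/2) ⟨by positivity, by linarith⟩)
    set a : ℝ := min (ε/2) (Real.exp (-(B + C + 1) / d)) with ha
    have hapos : 0 < a := lt_min (by positivity) (Real.exp_pos _)
    have haε : a ∈ Set.Ioo (0:ℝ) ε := ⟨hapos, lt_of_le_of_lt (min_le_left _ _) (by linarith)⟩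
    have hloga : Real.log a ≤ -(B + C + 1) / d := by
      calc Real.log a ≤ Real.log (Real.exp (-(B + C + 1) / d)) :=
            Real.log_le_log hapos (min_le_right _ _)
        _ = -(B + C + 1) / d := Real.log_exp _
    have h1 := hBbd a haε
    have h2 := hC a (hmem2 a hapos (le_of_lt haε.2))
    have h3 : |(2 * (N:ℝ) - L) * Real.log a| ≤ C + B := by
      calc |(2 * (N:ℝ) - L) * Real.log a|
          = |(f a - L * Real.log a) - (f a - 2 * N * Real.log a)| := by ring_nf
        _ ≤ |f a - L * Real.log a| + |f a - 2 * N * Real.log a| := abs_sub _ _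
        _ ≤ B + C := add_le_add h1 h2
        _ = C + B := by ring
    have h4 : |(2 * (N:ℝ) - L) * Real.log a| = d * |Real.log a| := by
      rw [abs_mul, hd]
    have h5 : (B + C + 1) / d ≤ |Real.log a| := by
      have : -Real.log a ≥ (B + C + 1) / d := by
        have hnd : -((B + C + 1) / d) = -(B + C + 1) / d := (neg_div _ _).symm
        linarith
      calc (B + C + 1) / d ≤ -Real.log a := this
        _ ≤ |Real.log a| := neg_le_abs _
    have h6 : B + C + 1 ≤ d * |Real.log a| := by
      have h7 := mul_le_mul_of_nonneg_left h5 (le_of_lt hdpos)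
      calc B + C + 1 = d * ((B + C + 1) / d) := by field_simp
        _ ≤ d * |Real.log a| := h7
    rw [h4] at h3
    linarith
  rw [← hL2N]
  exact hwlim

theorem stmt5 (N₁ N₂ : ℕ) (u v : ℝ → ℝ)
    (hu : ContDiffOn ℝ 2 u (Set.Ioi 0)) (hv : ContDiffOn ℝ 2 v (Set.Ioi 0))
    (hODEu : ∀ r > (0 : ℝ),
      deriv (fun s => s * deriv u s) r = -(r * Real.exp (v r) * (Real.exp (u r) + 1)))
    (hODEv : ∀ r > (0 : ℝ),
      deriv (fun s => s * deriv v s) r = -(r * Real.exp (u r) * (Real.exp (v r) - 1)))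
    (hu0 : ∃ C ε, 0 < ε ∧ ∀ r ∈ Set.Ioo (0 : ℝ) ε, |u r - 2 * N₁ * Real.log r| ≤ C)
    (hv0 : ∃ C ε, 0 < ε ∧ ∀ r ∈ Set.Ioo (0 : ℝ) ε, |v r - 2 * N₂ * Real.log r| ≤ C) :
    ∀ r > (0 : ℝ),
      2 * ∫ t in (0 : ℝ)..r, t * Real.exp (u t + v t)
        = 4 * (N₁ + 1) * (N₂ + 1)
          - (r * deriv u r + 2) * (r * deriv v r + 2)
          - r ^ 2 * (Real.exp (u r + v r) + Real.exp (v r) - Real.exp (u r)) := by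
  obtain ⟨C₁, ε₁, hε₁, hC₁⟩ := hu0
  obtain ⟨C₂, ε₂, hε₂, hC₂⟩ := hv0
  set K₁ : ℝ := Real.exp C₁ with hK₁
  set K₂ : ℝ := Real.exp C₂ with hK₂
  have hK₁pos : 0 < K₁ := Real.exp_pos _
  have hK₂pos : 0 < K₂ := Real.exp_pos _
  set ε : ℝ := min (min ε₁ 1) (min ε₂ 1) with hε
  have hεpos : 0 < ε := lt_min (lt_min hε₁ one_pos) (lt_min hε₂ one_pos)
  have hKu : ∀ t ∈ Set.Ioo (0:ℝ) ε, Real.exp (u t) ≤ K₁ := fun t ht =>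
    exp_bound hC₁ t ⟨ht.1, lt_of_lt_of_le ht.2 (min_le_left _ _)⟩
  have hKv : ∀ t ∈ Set.Ioo (0:ℝ) ε, Real.exp (v t) ≤ K₂ := fun t ht =>
    exp_bound hC₂ t ⟨ht.1, lt_of_lt_of_le ht.2 (min_le_right _ _)⟩
  have hucont : ContinuousOn u (Set.Ioi 0) := hu.continuousOn
  have hvcont : ContinuousOn v (Set.Ioi 0) := hv.continuousOn
  have heu : ContinuousOn (fun t => Real.exp (u t)) (Set.Ioi (0:ℝ)) :=
    Real.continuous_exp.comp_continuousOn hucont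
  have hev : ContinuousOn (fun t => Real.exp (v t)) (Set.Ioi (0:ℝ)) :=
    Real.continuous_exp.comp_continuousOn hvcont
  have hgucont : ContinuousOn (fun x : ℝ => -(x * Real.exp (v x) * (Real.exp (u x) + 1)))
      (Set.Ioi 0) := ((continuousOn_id.mul hev).mul (heu.add continuousOn_const)).neg
  have hgvcont : ContinuousOn (fun x : ℝ => -(x * Real.exp (u x) * (Real.exp (v x) - 1)))
      (Set.Ioi 0) := ((continuousOn_id.mul heu).mul (hev.sub continuousOn_const)).neg
  have hgubd : ∀ x ∈ Set.Ioo (0:ℝ) ε,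
      |(-(x * Real.exp (v x) * (Real.exp (u x) + 1)))| ≤ ε * K₂ * (K₁ + 1) := by
    intro x hx
    have h1 := hKu x hx; have h2 := hKv x hx
    have hE : (0:ℝ) < Real.exp (u x) := Real.exp_pos _
    have hE2 : (0:ℝ) < Real.exp (v x) := Real.exp_pos _
    have hxε : x ≤ ε := le_of_lt hx.2
    have hx0 : (0:ℝ) ≤ x := le_of_lt hx.1
    rw [abs_neg, abs_of_nonneg (mul_nonneg (mul_nonneg hx0 hE2.le) (by positivity))]
    gcongr
  have hgvbd : ∀ x ∈ Set.Ioo (0:ℝ) ε,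
      |(-(x * Real.exp (u x) * (Real.exp (v x) - 1)))| ≤ ε * K₁ * (K₂ + 1) := by
    intro x hx
    have h1 := hKu x hx; have h2 := hKv x hx
    have hE : (0:ℝ) < Real.exp (u x) := Real.exp_pos _
    have hE2 : (0:ℝ) < Real.exp (v x) := Real.exp_pos _
    have hxε : x ≤ ε := le_of_lt hx.2
    have hx0 : (0:ℝ) ≤ x := le_of_lt hx.1
    rw [abs_neg, abs_mul]
    have h3 : |Real.exp (v x) - 1| ≤ K₂ + 1 := by
      rw [abs_le]; constructor <;> nlinarith
    have h4 : |x * Real.exp (u x)| ≤ ε * K₁ := by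
      rw [abs_of_nonneg (by positivity)]
      gcongr
    calc |x * Real.exp (u x)| * |Real.exp (v x) - 1| ≤ (ε * K₁) * (K₂ + 1) := by
          apply mul_le_mul h4 h3 (abs_nonneg _) (by positivity)
      _ = ε * K₁ * (K₂ + 1) := by ring
  have hTu : Filter.Tendsto (fun s => s * deriv u s) (nhdsWithin 0 (Set.Ioi 0))
      (nhds (2 * (N₁:ℝ))) :=
    slope_limit N₁ u _ hu hgucont (fun x hx => hODEu x hx) (ε * K₂ * (K₁ + 1)) ε hεpos hgubd
      C₁ ε₁ hε₁ hC₁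
  have hTv : Filter.Tendsto (fun s => s * deriv v s) (nhdsWithin 0 (Set.Ioi 0))
      (nhds (2 * (N₂:ℝ))) :=
    slope_limit N₂ v _ hv hgvcont (fun x hx => hODEv x hx) (ε * K₁ * (K₂ + 1)) ε hεpos hgvbd
      C₂ ε₂ hε₂ hC₂
  set P : ℝ → ℝ := fun s => (s * deriv u s + 2) * (s * deriv v s + 2)
      + s ^ 2 * (Real.exp (u s + v s) + Real.exp (v s) - Real.exp (u s)) with hP
  have ht3 : Filter.Tendsto
      (fun s : ℝ => s ^ 2 * (Real.exp (u s + v s) + Real.exp (v s) - Real.exp (u s)))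
      (nhdsWithin 0 (Set.Ioi 0)) (nhds 0) := by
    refine squeeze_zero_norm' (a := fun s : ℝ => s ^ 2 * (K₁ * K₂ + K₂ + K₁)) ?_ ?_
    · filter_upwards [Ioo_mem_nhdsGT hεpos] with s hs
      have h1 := hKu s hs; have h2 := hKv s hs
      have h3 : Real.exp (u s + v s) ≤ K₁ * K₂ := by
        rw [Real.exp_add]
        exact mul_le_mul h1 h2 (le_of_lt (Real.exp_pos _)) (le_of_lt hK₁pos)
      have h4 : |Real.exp (u s + v s) + Real.exp (v s) - Real.exp (u s)| ≤ K₁ * K₂ + K₂ + K₁ := by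
        rw [abs_le]
        constructor <;> nlinarith [Real.exp_pos (u s), Real.exp_pos (v s),
          Real.exp_pos (u s + v s)]
      rw [Real.norm_eq_abs, abs_mul, abs_of_nonneg (sq_nonneg s)]
      exact mul_le_mul_of_nonneg_left h4 (sq_nonneg s)
    · have h5 : Filter.Tendsto (fun s : ℝ => s ^ 2 * (K₁ * K₂ + K₂ + K₁)) (nhds 0)
          (nhds ((0:ℝ) ^ 2 * (K₁ * K₂ + K₂ + K₁))) :=
        ((continuous_pow 2).mul continuous_const).tendsto 0
      have h6 := h5.mono_left (nhdsWithin_le_nhds (s := Set.Ioi (0:ℝ)))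
      simpa using h6
  have hPlim : Filter.Tendsto P (nhdsWithin 0 (Set.Ioi 0))
      (nhds ((2 * (N₁:ℝ) + 2) * (2 * (N₂:ℝ) + 2))) := by
    have h1 := (hTu.add (tendsto_const_nhds (x := (2:ℝ)))).mul
      (hTv.add (tendsto_const_nhds (x := (2:ℝ))))
    have h2 := h1.add ht3
    simpa using h2
  intro r hr
  have hDP : ∀ x ∈ Set.Ioi (0:ℝ), HasDerivAt P (-(2 * x * Real.exp (u x + v x))) x := by
    intro x hx
    rw [Set.mem_Ioi] at hx
    have hwu : HasDerivAt (fun s => s * deriv u s)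
        (-(x * Real.exp (v x) * (Real.exp (u x) + 1))) x :=
      hasDerivAt_w hu hODEu hx
    have hwv : HasDerivAt (fun s => s * deriv v s)
        (-(x * Real.exp (u x) * (Real.exp (v x) - 1))) x :=
      hasDerivAt_w hv hODEv hx
    have hux : HasDerivAt u (deriv u x) x := hasDerivAt_of_c2 hu hx
    have hvx : HasDerivAt v (deriv v x) x := hasDerivAt_of_c2 hv hx
    have hE : HasDerivAt (fun s => Real.exp (u s + v s))
        (Real.exp (u x + v x) * (deriv u x + deriv v x)) x := (hux.add hvx).exp
    have hEv : HasDerivAt (fun s => Real.exp (v s)) (Real.exp (v x) * deriv v x) x := hvx.exp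
    have hEu : HasDerivAt (fun s => Real.exp (u s)) (Real.exp (u x) * deriv u x) x := hux.exp
    have hsq : HasDerivAt (fun s : ℝ => s ^ 2) (2 * x) x := by
      simpa using hasDerivAt_pow 2 x
    have hbig := ((hwu.add_const 2).mul (hwv.add_const 2)).add
      (hsq.mul ((hE.add hEv).sub hEu))
    refine hbig.congr_deriv ?_
    simp only [Pi.add_apply, Pi.sub_apply]
    rw [Real.exp_add]
    ring
  set f : ℝ → ℝ := fun t => t * Real.exp (u t + v t) with hf
  set c : ℝ := min (ε/2) r with hc
  have hcpos : 0 < c := lt_min (by positivity) hr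
  have hcr : c ≤ r := min_le_right _ _
  have hcε : c < ε := lt_of_le_of_lt (min_le_left _ _) (by linarith)
  have hcont_f : ContinuousOn f (Set.Ioi 0) :=
    continuousOn_id.mul (Real.continuous_exp.comp_continuousOn (hucont.add hvcont))
  obtain ⟨K₃, hK₃⟩ := (isCompact_Icc (a := c) (b := r)).exists_bound_of_continuousOn
    (hcont_f.mono (fun t ht => lt_of_lt_of_le hcpos ht.1))
  set Kb : ℝ := max (c * (K₁ * K₂)) K₃ with hKb
  have hfbd : ∀ t ∈ Set.Ioc (0:ℝ) r, |f t| ≤ Kb := by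
    intro t ht
    rcases le_or_gt t c with h | h
    · have htε : t ∈ Set.Ioo (0:ℝ) ε := ⟨ht.1, lt_of_le_of_lt h hcε⟩
      have h1 := hKu t htε; have h2 := hKv t htε
      have habs : |f t| = t * Real.exp (u t + v t) := abs_of_nonneg (by
        have := le_of_lt ht.1
        positivity)
      rw [habs, Real.exp_add]
      refine le_trans ?_ (le_max_left _ _)
      apply mul_le_mul h _ (by positivity) (le_of_lt hcpos)
      exact mul_le_mul h1 h2 (le_of_lt (Real.exp_pos _)) (le_of_lt hK₁pos)
    · have := hK₃ t ⟨le_of_lt h, ht.2⟩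
      rw [Real.norm_eq_abs] at this
      exact le_trans this (le_max_right _ _)
  have hIntOn : IntegrableOn f (Set.Ioc (0:ℝ) r) :=
    integrableOn_of_bdd measurableSet_Ioc (by rw [Real.volume_Ioc]; exact ENNReal.ofReal_lt_top)
      (hcont_f.mono fun t ht => ht.1) hfbd
  have hII : IntervalIntegrable f volume 0 r :=
    (intervalIntegrable_iff_integrableOn_Ioc_of_le (le_of_lt hr)).2 hIntOn
  have hIeq : ∀ a ∈ Set.Ioo (0:ℝ) r, 2 * (∫ t in a..r, f t) = P a - P r := by
    intro a ha
    have h1 : ∫ t in a..r, (-2 : ℝ) * f t = P r - P a := by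
      refine intervalIntegral.integral_eq_sub_of_hasDerivAt (fun x hx => ?_) ?_
      · rw [Set.uIcc_of_le (le_of_lt ha.2)] at hx
        have h2 := hDP x (Set.mem_Ioi.2 (lt_of_lt_of_le ha.1 hx.1))
        refine h2.congr_deriv ?_
        simp only [hf]; ring
      · refine ContinuousOn.intervalIntegrable ?_
        refine continuousOn_const.mul (hcont_f.mono ?_)
        rw [Set.uIcc_of_le (le_of_lt ha.2)]
        exact fun t ht => lt_of_lt_of_le ha.1 ht.1
    rw [intervalIntegral.integral_const_mul] at h1
    linarith
  set q : ℕ → ℝ := fun n => c / (n + 2) with hq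
  have hqpos : ∀ n, 0 < q n := fun n => by
    rw [hq]; positivity
  have hqlec : ∀ n, q n ≤ c / 2 := by
    intro n
    rw [hq]
    apply div_le_div_of_nonneg_left (le_of_lt hcpos) (by norm_num)
    have : (0:ℝ) ≤ (n:ℝ) := Nat.cast_nonneg n
    linarith
  have hqlt : ∀ n, q n < r := fun n =>
    lt_of_le_of_lt (hqlec n) (lt_of_lt_of_le (by linarith) hcr)
  have hq0 : Filter.Tendsto q Filter.atTop (nhds 0) :=
    Filter.Tendsto.div_atTop tendsto_const_nhds
      (Filter.tendsto_atTop_add_const_right _ 2 tendsto_natCast_atTop_atTop)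
  have hqtend : Filter.Tendsto q Filter.atTop (nhdsWithin 0 (Set.Ioi 0)) :=
    tendsto_nhdsWithin_of_tendsto_nhds_of_eventually_within _ hq0
      (Filter.Eventually.of_forall (fun n => Set.mem_Ioi.2 (hqpos n)))
  have hA : Filter.Tendsto (fun n => P (q n) - P r) Filter.atTop
      (nhds ((2 * (N₁:ℝ) + 2) * (2 * (N₂:ℝ) + 2) - P r)) :=
    (hPlim.comp hqtend).sub tendsto_const_nhds
  have hsplitn : ∀ n, ∫ t in (q n)..r, f t = (∫ t in (0:ℝ)..r, f t) - ∫ t in (0:ℝ)..(q n), f t := by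
    intro n
    have hsub1 : Set.uIcc (0:ℝ) (q n) ⊆ Set.uIcc (0:ℝ) r := by
      rw [Set.uIcc_of_le (le_of_lt (hqpos n)), Set.uIcc_of_le (le_of_lt hr)]
      exact Set.Icc_subset_Icc le_rfl (le_of_lt (hqlt n))
    have hsub2 : Set.uIcc (q n) r ⊆ Set.uIcc (0:ℝ) r := by
      rw [Set.uIcc_of_le (le_of_lt (hqlt n)), Set.uIcc_of_le (le_of_lt hr)]
      exact Set.Icc_subset_Icc (le_of_lt (hqpos n)) le_rfl
    have hi1 : IntervalIntegrable f volume 0 (q n) := hII.mono_set hsub1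
    have hi2 : IntervalIntegrable f volume (q n) r := hII.mono_set hsub2
    linarith [intervalIntegral.integral_add_adjacent_intervals hi1 hi2]
  have hzero : Filter.Tendsto (fun n => ∫ t in (0:ℝ)..(q n), f t) Filter.atTop (nhds 0) := by
    refine squeeze_zero_norm' (a := fun n => Kb * q n) ?_ ?_
    · refine Filter.Eventually.of_forall (fun n => ?_)
      have h1 : ∀ x ∈ Set.uIoc (0:ℝ) (q n), ‖f x‖ ≤ Kb := by
        intro x hx
        rw [Set.uIoc_of_le (le_of_lt (hqpos n))] at hx
        rw [Real.norm_eq_abs]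
        exact hfbd x ⟨hx.1, le_trans hx.2 (le_of_lt (hqlt n))⟩
      have h2 := intervalIntegral.norm_integral_le_of_norm_le_const h1
      rwa [sub_zero, abs_of_nonneg (le_of_lt (hqpos n))] at h2
    · have h3 := tendsto_const_nhds (x := Kb) (f := Filter.atTop (α := ℕ)) |>.mul hq0
      simpa using h3
  have hB : Filter.Tendsto (fun n => 2 * ∫ t in (q n)..r, f t) Filter.atTop
      (nhds (2 * ∫ t in (0:ℝ)..r, f t)) := by
    have h4 : Filter.Tendsto (fun n => 2 * ((∫ t in (0:ℝ)..r, f t) - ∫ t in (0:ℝ)..(q n), f t))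
        Filter.atTop (nhds (2 * ((∫ t in (0:ℝ)..r, f t) - 0))) :=
      (tendsto_const_nhds.sub hzero).const_mul 2
    rw [sub_zero] at h4
    refine h4.congr (fun n => ?_)
    rw [hsplitn n]
  have heqfun : (fun n => 2 * ∫ t in (q n)..r, f t) = (fun n => P (q n) - P r) :=
    funext (fun n => hIeq (q n) ⟨hqpos n, hqlt n⟩)
  rw [heqfun] at hB
  have key := tendsto_nhds_unique hB hA
  have hPr : P r = (r * deriv u r + 2) * (r * deriv v r + 2)
      + r ^ 2 * (Real.exp (u r + v r) + Real.exp (v r) - Real.exp (u r)) := rfl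
  have hcast : (2 * (N₁:ℝ) + 2) * (2 * (N₂:ℝ) + 2) = 4 * ((N₁:ℝ) + 1) * ((N₂:ℝ) + 1) := by
    ring
  rw [hPr] at key
  rw [hf] at key
  linarith
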